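/- Let d ≥ 1 and ℓ = d·⌈log₂ d⌉ + 2d. Define u ∈ {0,1}^ℓ as u = 1^d u_0 u_1 ⋯ u_{⌈log₂ d⌉}, where u_i is the length-d prefix of (1^{2^i} 0^{2^i})^d. Then u is a d-auto-cyclic vector: for all 1 ≤ i ≤ d, the Hamming distance between u and the vector 0^i u[0, ℓ−i−1] (the vector obtained by prepending i zeros to u and truncating to length ℓ) is at least d. -/

import Mathlib

/-- The `d`-auto-cyclic vector of Levy and Yaakobi: `u = 1^d u_0 u_1 ⋯ u_{⌈log₂ d⌉}`,
where `u_i` is the length-`d` prefix of `(1^{2^i} 0^{2^i})^d`. -/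
def autoCyclicVec (d : ℕ) : ℕ → Bool := fun j =>
  if j < d then true
  else decide ((((j - d) % d) / 2 ^ ((j - d) / d)) % 2 = 0)

lemma testBit_log2 {x : ℕ} (hx : x ≠ 0) : x.testBit x.log2 = true := by
  have h1 := Nat.log2_self_le hx
  have h2 := Nat.lt_log2_self (n := x)
  rw [Nat.testBit_eq_decide_div_mod_eq]
  have : x / 2 ^ x.log2 = 1 := by
    apply Nat.div_eq_of_lt_le (by simpa using h1)
    have h2' : x < 2 ^ x.log2 * 2 := by simpa [Nat.pow_succ] using h2
    omega
  simp [this]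

/-- `u` is a `d`-auto-cyclic vector: for all `1 ≤ i ≤ d`, the Hamming distance between `u`
and `0^i u[0, ℓ−i−1]` is at least `d`, where `ℓ = d⌈log₂ d⌉ + 2d`. -/
theorem autoCyclicVec_is_d_auto_cyclic (d : ℕ) (hd : 1 ≤ d) :
    ∀ i : ℕ, 1 ≤ i → i ≤ d →
      d ≤ hammingDist
        (fun j : Fin (d * Nat.clog 2 d + 2 * d) => autoCyclicVec d j)
        (fun j : Fin (d * Nat.clog 2 d + 2 * d) =>
          if (j : ℕ) < i then false else autoCyclicVec d ((j : ℕ) - i)) := by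
  intro i hi1 hid
  set K := Nat.clog 2 d with hK
  set L := d * K + 2 * d with hL
  have hdK : d ≤ 2 ^ K := Nat.le_pow_clog one_lt_two d
  -- the map
  set F : ℕ → ℕ := fun j => if j < i then j else d + (j ^^^ (j - i)).log2 * d + j with hF
  -- facts about F for i ≤ j < d
  have key : ∀ j, i ≤ j → j < d →
      (j ^^^ (j - i)).log2 < K ∧ j.testBit (j ^^^ (j - i)).log2 ≠ (j - i).testBit (j ^^^ (j - i)).log2 := by
    intro j hij hjd
    have hne : j - i ≠ j := by omega
    have hx : j ^^^ (j - i) ≠ 0 := fun h => hne (by simpa [Nat.xor_assoc] using congrArg (· ^^^ (j - i)) h : j = j - i).symm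
    have hlt : j ^^^ (j - i) < 2 ^ K :=
      Nat.xor_lt_two_pow (by omega) (by omega)
    refine ⟨(Nat.log2_lt hx).mpr hlt, ?_⟩
    have := testBit_log2 hx
    rw [Nat.testBit_xor] at this
    intro h; rw [h] at this; simp at this
  have hFlt : ∀ j < d, F j < L := by
    intro j hjd
    by_cases h : j < i
    · simp only [hF, if_pos h]; omega
    · simp only [hF, if_neg h]
      have hm := (key j (by omega) hjd).1
      have h2 : ((j ^^^ (j - i)).log2 + 1) * d ≤ K * d := Nat.mul_le_mul_right d hm
      have h3 : ((j ^^^ (j - i)).log2 + 1) * d = (j ^^^ (j - i)).log2 * d + d := by ring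
      have h4 : d * K = K * d := by ring
      simp only [hL]
      linarith
  have hval : ∀ m j : ℕ, j < d → autoCyclicVec d (d + m * d + j) = decide (j / 2 ^ m % 2 = 0) := by
    intro m j hjd
    unfold autoCyclicVec
    rw [if_neg (by omega)]
    have h1 : d + m * d + j - d = m * d + j := by omega
    rw [h1, Nat.mul_comm m d, Nat.mul_add_mod, Nat.mul_add_div (by omega : 0 < d),
      Nat.mod_eq_of_lt hjd, Nat.div_eq_of_lt hjd, Nat.add_zero]
  -- mismatch at F j
  have hmem : ∀ j < d, F j < L ∧
      autoCyclicVec d (F j) ≠ (if F j < i then false else autoCyclicVec d (F j - i)) := by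
    intro j hjd
    refine ⟨hFlt j hjd, ?_⟩
    by_cases h : j < i
    · simp only [hF]
      rw [if_pos h, if_pos h]
      unfold autoCyclicVec
      rw [if_pos hjd]; simp
    · simp only [hF]
      rw [if_neg h]
      set m := (j ^^^ (j - i)).log2 with hm
      obtain ⟨hmK, hbit⟩ := key j (by omega) hjd
      rw [if_neg (by omega : ¬ d + m * d + j < i)]
      have e1 : d + m * d + j - i = d + m * d + (j - i) := by omega
      rw [e1, hval m j hjd, hval m (j - i) (by omega)]
      rw [Nat.testBit_eq_decide_div_mod_eq, Nat.testBit_eq_decide_div_mod_eq] at hbit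
      rw [← hm] at hbit
      have a1 : j / 2 ^ m % 2 < 2 := Nat.mod_lt _ (by norm_num)
      have a2 : (j - i) / 2 ^ m % 2 < 2 := Nat.mod_lt _ (by norm_num)
      simp only [ne_eq, decide_eq_decide] at hbit ⊢
      omega
  -- injectivity
  have hinj : ∀ j₁ < d, ∀ j₂ < d, F j₁ = F j₂ → j₁ = j₂ := by
    intro j₁ h₁ j₂ h₂ heq
    have modF : ∀ j, i ≤ j → j < d → F j % d = j ∧ d ≤ F j := by
      intro j hij hjd
      simp only [hF, if_neg (by omega : ¬ j < i)]
      constructor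
      · have e : d + (j ^^^ (j - i)).log2 * d + j = d * ((j ^^^ (j - i)).log2 + 1) + j := by ring
        rw [e, Nat.mul_add_mod, Nat.mod_eq_of_lt hjd]
      · omega
    by_cases c₁ : j₁ < i <;> by_cases c₂ : j₂ < i
    · have e₁ : F j₁ = j₁ := by simp [hF, c₁]
      have e₂ : F j₂ = j₂ := by simp [hF, c₂]
      omega
    · have e₁ : F j₁ = j₁ := by simp [hF, c₁]
      have := (modF j₂ (by omega) h₂).2
      omega
    · have e₂ : F j₂ = j₂ := by simp [hF, c₂]
      have := (modF j₁ (by omega) h₁).2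
      omega
    · have m₁ := (modF j₁ (by omega) h₁).1
      have m₂ := (modF j₂ (by omega) h₂).1
      rw [heq] at m₁; rw [m₂] at m₁; omega
  -- conclude
  have : hammingDist
        (fun j : Fin L => autoCyclicVec d j)
        (fun j : Fin L =>
          if (j : ℕ) < i then false else autoCyclicVec d ((j : ℕ) - i)) =
      (Finset.univ.filter (fun j : Fin L =>
        autoCyclicVec d j ≠ (if (j : ℕ) < i then false else autoCyclicVec d ((j : ℕ) - i)))).card := rfl
  rw [this]
  calc d = (Finset.range d).card := (Finset.card_range d).symm
    _ ≤ _ := by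
        refine Finset.card_le_card_of_injOn
          (fun j => (⟨F j % L, Nat.mod_lt _ (by omega)⟩ : Fin L)) ?_ ?_
        · intro j hj
          rw [Finset.coe_range, Set.mem_Iio] at hj
          obtain ⟨hlt, hne⟩ := hmem j hj
          rw [Finset.mem_coe, Finset.mem_filter]
          refine ⟨Finset.mem_univ _, ?_⟩
          simpa [Nat.mod_eq_of_lt hlt] using hne
        · intro j₁ h₁ j₂ h₂ heq
          simp only [Finset.coe_range, Set.mem_Iio] at h₁ h₂
          have l₁ := hFlt j₁ h₁; have l₂ := hFlt j₂ h₂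
          apply hinj j₁ h₁ j₂ h₂
          have := congrArg Fin.val heq
          simpa [Nat.mod_eq_of_lt l₁, Nat.mod_eq_of_lt l₂] using this
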